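/- Let 𝔸 = (A, ≤, →, Σ) be an implicative algebra with |A| < κ for a strongly inaccessible cardinal κ, and let W, ∈_W, =_W and the interpretation ‖·‖ be as defined below. Then W validates the Extensionality axiom: ‖∀x ∀y ((x ⊆ y ∧ y ⊆ x) → x = y)‖ ∈ Σ, where x ⊆ y abbreviates ∀z(z ∈ x → z ∈ y). -/

import Mathlib

universe u

/-- An implicative algebra `𝔸 = (A, ≤, →, Σ)`:  a complete lattice `(A, ≤)` together with an
implication `imp` which is antitone in its first argument, monotone in its second argument and
turns infima in the second argument into infima, and a separator `Sig ⊆ A` which is upward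
closed, closed under modus ponens and contains the combinators `K` and `S`. -/
structure ImplicativeAlgebra (A : Type u) [CompleteLattice A] where
  imp : A → A → A
  imp_antitone : ∀ ⦃a a' b : A⦄, a ≤ a' → imp a' b ≤ imp a b
  imp_monotone : ∀ ⦃a b b' : A⦄, b ≤ b' → imp a b ≤ imp a b'
  imp_sInf : ∀ (a : A) (S : Set A), imp a (sInf S) = ⨅ b ∈ S, imp a b
  Sig : Set A
  Sig_upward : ∀ ⦃a b : A⦄, a ∈ Sig → a ≤ b → b ∈ Sig
  Sig_mp : ∀ ⦃a b : A⦄, imp a b ∈ Sig → a ∈ Sig → b ∈ Sig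
  Sig_K : (⨅ a : A, ⨅ b : A, imp a (imp b a)) ∈ Sig
  Sig_S : (⨅ a : A, ⨅ b : A, ⨅ c : A,
      imp (imp a (imp b c)) (imp (imp a b) (imp a c))) ∈ Sig

namespace ImplicativeAlgebra

variable {A : Type u} [CompleteLattice A]

/-- `a × b := ⨅ x, ((a → (b → x)) → x)`. -/
def times (IA : ImplicativeAlgebra A) (a b : A) : A :=
  ⨅ x : A, IA.imp (IA.imp a (IA.imp b x)) x

/-- `a + b := ⨅ x, ((a → x) → ((b → x) → x))`. -/
def plus (IA : ImplicativeAlgebra A) (a b : A) : A :=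
  ⨅ x : A, IA.imp (IA.imp a x) (IA.imp (IA.imp b x) x)

/-- `∃⃗_{i} f i := ⨅ x, ((⨅ i, (f i → x)) → x)`.  (`∀⃗` is just `⨅`.) -/
def aex (IA : ImplicativeAlgebra A) {ι : Sort*} (f : ι → A) : A :=
  ⨅ x : A, IA.imp (⨅ i, IA.imp (f i) x) x

/-- `φ ⊢_{Σ[I]} ψ` iff `⨅ i, (φ i → ψ i) ∈ Σ`. -/
def SigLe (IA : ImplicativeAlgebra A) {ι : Sort*} (f g : ι → A) : Prop :=
  (⨅ i, IA.imp (f i) (g i)) ∈ IA.Sig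

/-- `φ ≡_{Σ[I]} ψ` iff `φ ⊢_{Σ[I]} ψ` and `ψ ⊢_{Σ[I]} φ`. -/
def SigEquiv (IA : ImplicativeAlgebra A) {ι : Sort*} (f g : ι → A) : Prop :=
  IA.SigLe f g ∧ IA.SigLe g f

end ImplicativeAlgebra

/-- Pre-elements of the cumulative hierarchy of partial functions valued in `A`:
an element is an `A`-labelled family of previously constructed elements, i.e. a partial
function (presented by a family indexed by its domain) from earlier elements to `A`. -/
inductive PreW (A : Type u) : Type (u + 1)
  | mk (ι : Type u) (fam : ι → PreW A) (val : ι → A)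

namespace PreW

variable {A : Type u}

/-- The (index type of the) domain of a partial function. -/
def dom : PreW A → Type u
  | ⟨ι, _, _⟩ => ι

/-- The family of elements of the domain. -/
def fam : (w : PreW A) → w.dom → PreW A
  | ⟨_, f, _⟩ => f

/-- The values in `A` of the partial function. -/
def val : (w : PreW A) → w.dom → A
  | ⟨_, _, v⟩ => v

/-- `w` is hereditarily of size `< κ`:  this carves out exactly the elements of the stage
`W_κ` of the hierarchy (for `κ` inaccessible). -/
def HSmall (κ : Cardinal.{u}) : PreW A → Prop
  | ⟨ι, f, _⟩ => Cardinal.mk ι < κ ∧ ∀ i, HSmall κ (f i)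

theorem HSmall.fam {κ : Cardinal.{u}} :
    ∀ {w : PreW A}, w.HSmall κ → ∀ i : w.dom, (w.fam i).HSmall κ
  | ⟨_, _, _⟩, h, i => h.2 i

/-- The rank of an element of the hierarchy. -/
noncomputable def rank : PreW A → Ordinal.{u}
  | ⟨_, f, _⟩ => ⨆ i, Order.succ (rank (f i))

theorem rank_lt_mk {ι : Type u} (f : ι → PreW A) (v : ι → A) (i : ι) :
    (f i).rank < (PreW.mk ι f v).rank := by
  have h : Order.succ (f i).rank ≤ ⨆ j, Order.succ (f j).rank := Ordinal.le_iSup _ i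
  have : (f i).rank < ⨆ j, Order.succ (f j).rank :=
    lt_of_lt_of_le (Order.lt_succ _) h
  simpa [rank] using this

end PreW

namespace ImplicativeAlgebra

variable {A : Type u} [CompleteLattice A]

/-- `α =_W β`, defined by recursion on rank:
`α =_W β := (α ⊆_W β) × (β ⊆_W α)` where
`α ⊆_W β := ∀⃗_{t ∈ dom α} (α t → (fam α t ∈_W β))` and
`γ ∈_W β := ∃⃗_{s ∈ dom β} (β s × (fam β s =_W γ))`. -/
noncomputable def eqW (IA : ImplicativeAlgebra A) : PreW A → PreW A → A
  | ⟨ι₁, f₁, v₁⟩, ⟨ι₂, f₂, v₂⟩ =>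
    IA.times
      (⨅ t : ι₁, IA.imp (v₁ t)
        (IA.aex fun s : ι₂ => IA.times (v₂ s) (IA.eqW (f₂ s) (f₁ t))))
      (⨅ t : ι₂, IA.imp (v₂ t)
        (IA.aex fun s : ι₁ => IA.times (v₁ s) (IA.eqW (f₁ s) (f₂ t))))
termination_by α β => max α.rank β.rank
decreasing_by
  · exact max_lt (lt_of_lt_of_le (PreW.rank_lt_mk f₂ v₂ s) (le_max_right _ _))
      (lt_of_lt_of_le (PreW.rank_lt_mk f₁ v₁ t) (le_max_left _ _))
  · exact max_lt (lt_of_lt_of_le (PreW.rank_lt_mk f₁ v₁ s) (le_max_left _ _))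
      (lt_of_lt_of_le (PreW.rank_lt_mk f₂ v₂ t) (le_max_right _ _))

/-- `α ∈_W β := ∃⃗_{s ∈ dom β} (β s × (fam β s =_W α))`. -/
noncomputable def memW (IA : ImplicativeAlgebra A) (α β : PreW A) : A :=
  IA.aex fun s : β.dom => IA.times (β.val s) (IA.eqW (β.fam s) α)

/-- `α ⊆_W β := ∀⃗_{t ∈ dom α} (α t → (fam α t ∈_W β))`. -/
noncomputable def subW (IA : ImplicativeAlgebra A) (α β : PreW A) : A :=
  ⨅ t : α.dom, IA.imp (α.val t) (IA.memW (α.fam t) β)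

end ImplicativeAlgebra

/-- The stage `W = W_κ` of the hierarchy: all hereditarily `< κ`-sized elements. -/
def WSet (A : Type u) (κ : Cardinal.{u}) : Type (u + 1) :=
  {w : PreW A // w.HSmall κ}

/-- An element of the domain of `w ∈ W`, as an element of `W`. -/
def WSet.fam {A : Type u} {κ : Cardinal.{u}} (w : WSet A κ) (i : w.1.dom) : WSet A κ :=
  ⟨w.1.fam i, w.2.fam i⟩

/-- Formulas (in context of length `n`) of the first-order language of set theory, with
(de Bruijn-style) variables `Fin n`, binary predicates `∈` and `=`, connectives `⊥`, `∧`, `∨`,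
`→` and quantifiers `∃`, `∀` (binding the last variable of the enlarged context). -/
inductive SetFormula : ℕ → Type
  | bot {n : ℕ} : SetFormula n
  | mem {n : ℕ} (i j : Fin n) : SetFormula n
  | eq {n : ℕ} (i j : Fin n) : SetFormula n
  | and {n : ℕ} (φ ψ : SetFormula n) : SetFormula n
  | or {n : ℕ} (φ ψ : SetFormula n) : SetFormula n
  | imp {n : ℕ} (φ ψ : SetFormula n) : SetFormula n
  | ex {n : ℕ} (φ : SetFormula (n + 1)) : SetFormula n
  | all {n : ℕ} (φ : SetFormula (n + 1)) : SetFormula n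

namespace SetFormula

/-- Renaming of variables (since the only terms of the language of set theory are variables,
substitution is a special case). -/
def rename : {n m : ℕ} → (Fin n → Fin m) → SetFormula n → SetFormula m
  | _, _, _, .bot => .bot
  | _, _, f, .mem i j => .mem (f i) (f j)
  | _, _, f, .eq i j => .eq (f i) (f j)
  | _, _, f, .and φ ψ => .and (φ.rename f) (ψ.rename f)
  | _, _, f, .or φ ψ => .or (φ.rename f) (ψ.rename f)
  | _, _, f, .imp φ ψ => .imp (φ.rename f) (ψ.rename f)
  | _, _, f, .ex φ => .ex (φ.rename (Fin.snoc (Fin.castSucc ∘ f) (Fin.last _)))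
  | _, _, f, .all φ => .all (φ.rename (Fin.snoc (Fin.castSucc ∘ f) (Fin.last _)))

/-- Universal closure `∀x₁ … ∀xₙ φ` of a formula in context of length `n`. -/
def allClose : {n : ℕ} → SetFormula n → SetFormula 0
  | 0, φ => φ
  | _ + 1, φ => allClose (.all φ)

end SetFormula

namespace ImplicativeAlgebra

variable {A : Type u} [CompleteLattice A]

/-- The interpretation `‖φ[x₁,…,xₙ]‖ : Wⁿ → A` of a formula in context, by recursion on the
structure of `φ`:  atomic formulas are interpreted by `∈_W` and `=_W`, `∧` by `×`, `∨` by `+`,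
`→` by `→`, `∃` by `∃⃗` over `W` and `∀` by `∀⃗` (i.e. `⨅`) over `W`. -/
noncomputable def interp (IA : ImplicativeAlgebra A) (κ : Cardinal.{u}) :
    {n : ℕ} → SetFormula n → (Fin n → WSet A κ) → A
  | _, .bot, _ => ⊥
  | _, .mem i j, v => IA.memW (v i).1 (v j).1
  | _, .eq i j, v => IA.eqW (v i).1 (v j).1
  | _, .and φ ψ, v => IA.times (IA.interp κ φ v) (IA.interp κ ψ v)
  | _, .or φ ψ, v => IA.plus (IA.interp κ φ v) (IA.interp κ ψ v)
  | _, .imp φ ψ, v => IA.imp (IA.interp κ φ v) (IA.interp κ ψ v)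
  | _, .ex φ, v => IA.aex fun β : WSet A κ => IA.interp κ φ (Fin.snoc v β)
  | _, .all φ, v => ⨅ β : WSet A κ, IA.interp κ φ (Fin.snoc v β)

end ImplicativeAlgebra


/-! ### Auxiliary development: application, combinators, bracket abstraction -/

namespace ImplicativeAlgebra

variable {A : Type u} [CompleteLattice A] (IA : ImplicativeAlgebra A)

/-- Application `a b := ⨅ {c | a ≤ b → c}`. -/
def app (a b : A) : A := sInf {c | a ≤ IA.imp b c}

theorem le_imp_app (a b : A) : a ≤ IA.imp b (IA.app a b) := by
  rw [app, IA.imp_sInf]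
  exact le_iInf fun c => le_iInf fun hc => hc

theorem app_le {a b c : A} (h : a ≤ IA.imp b c) : IA.app a b ≤ c := sInf_le h

theorem imp_app_le (b c : A) : IA.app (IA.imp b c) b ≤ c := IA.app_le le_rfl

theorem le_imp_of_app_le {M b c : A} (h : IA.app M b ≤ c) : M ≤ IA.imp b c :=
  (IA.le_imp_app M b).trans (IA.imp_monotone h)

theorem app_mono {a a' b b' : A} (ha : a ≤ a') (hb : b ≤ b') :
    IA.app a b ≤ IA.app a' b' := by
  apply sInf_le_sInf
  intro c hc
  exact ha.trans (hc.trans (IA.imp_antitone hb))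

theorem app_Sig {a b : A} (ha : a ∈ IA.Sig) (hb : b ∈ IA.Sig) : IA.app a b ∈ IA.Sig :=
  IA.Sig_mp (IA.Sig_upward ha (IA.le_imp_app a b)) hb

/-- The `K` combinator as an element. -/
def Kt : A := ⨅ a : A, ⨅ b : A, IA.imp a (IA.imp b a)

/-- The `S` combinator as an element. -/
def St : A := ⨅ a : A, ⨅ b : A, ⨅ c : A,
    IA.imp (IA.imp a (IA.imp b c)) (IA.imp (IA.imp a b) (IA.imp a c))

theorem Kt_Sig : IA.Kt ∈ IA.Sig := IA.Sig_K
theorem St_Sig : IA.St ∈ IA.Sig := IA.Sig_S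

theorem app_K (a b : A) : IA.app (IA.app IA.Kt a) b ≤ a := by
  apply IA.app_le
  apply IA.app_le
  exact (iInf_le _ a).trans (iInf_le _ b)

theorem app_S (a b c : A) :
    IA.app (IA.app (IA.app IA.St a) b) c ≤ IA.app (IA.app a c) (IA.app b c) := by
  apply IA.app_le
  apply IA.app_le
  apply IA.app_le
  have h1 : a ≤ IA.imp c (IA.imp (IA.app b c) (IA.app (IA.app a c) (IA.app b c))) :=
    (IA.le_imp_app a c).trans (IA.imp_monotone (IA.le_imp_app _ _))
  have h2 : b ≤ IA.imp c (IA.app b c) := IA.le_imp_app b c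
  refine le_trans ?_ (IA.imp_antitone h1)
  refine le_trans ?_ (IA.imp_monotone (IA.imp_antitone h2))
  exact (iInf_le _ c).trans ((iInf_le _ (IA.app b c)).trans
    (iInf_le _ (IA.app (IA.app a c) (IA.app b c))))

/-- The `I` combinator. -/
def It : A := IA.app (IA.app IA.St IA.Kt) IA.Kt

theorem It_Sig : IA.It ∈ IA.Sig := IA.app_Sig (IA.app_Sig IA.St_Sig IA.Kt_Sig) IA.Kt_Sig

theorem app_I (a : A) : IA.app IA.It a ≤ a :=
  (IA.app_S IA.Kt IA.Kt a).trans (IA.app_K a (IA.app IA.Kt a))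

end ImplicativeAlgebra

/-- Combinatory terms with constants from `A` and `n` free variables. -/
inductive CTerm (A : Type u) : ℕ → Type u
  | var {n : ℕ} : Fin n → CTerm A n
  | const {n : ℕ} : A → CTerm A n
  | app {n : ℕ} : CTerm A n → CTerm A n → CTerm A n

namespace CTerm

variable {A : Type u} [CompleteLattice A] (IA : ImplicativeAlgebra A)

/-- Evaluation of a combinatory term under a valuation. -/
def ev : {n : ℕ} → CTerm A n → (Fin n → A) → A
  | _, .var i, v => v i
  | _, .const a, _ => a
  | _, .app t u, v => IA.app (ev t v) (ev u v)

/-- Bracket abstraction of the last variable. -/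
def abs : {n : ℕ} → CTerm A (n + 1) → CTerm A n
  | _, .var i =>
      Fin.lastCases (.const IA.It) (fun j => .app (.const IA.Kt) (.var j)) i
  | _, .const a => .app (.const IA.Kt) (.const a)
  | _, .app t u => .app (.app (.const IA.St) (abs t)) (abs u)

theorem app_ev_abs {n : ℕ} (t : CTerm A (n + 1)) (v : Fin n → A) (a : A) :
    IA.app (ev IA (abs IA t) v) a ≤ ev IA t (Fin.snoc v a) := by
  induction t with
  | var i =>
      induction i using Fin.lastCases with
      | last => simpa [ev, abs, Fin.snoc_last] using IA.app_I a
      | cast j => simpa [ev, abs, Fin.snoc_castSucc] using IA.app_K (v j) a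
  | const b => simpa [ev, abs] using IA.app_K b a
  | app t u iht ihu =>
      simp only [ev, abs]
      refine le_trans ?_ (IA.app_mono iht ihu)
      exact IA.app_S (ev IA (abs IA t) v) (ev IA (abs IA u) v) a

/-- All constants of a term belong to the separator. -/
def Good : {n : ℕ} → CTerm A n → Prop
  | _, .var _ => True
  | _, .const a => a ∈ IA.Sig
  | _, .app t u => Good t ∧ Good u

theorem Good.abs {n : ℕ} {t : CTerm A (n + 1)} (h : Good IA t) : Good IA (abs IA t) := by
  induction t with
  | var i =>
      induction i using Fin.lastCases with
      | last => simpa [Good, CTerm.abs] using IA.It_Sig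
      | cast j =>
          simp only [CTerm.abs, Fin.lastCases_castSucc, Good]
          exact ⟨IA.Kt_Sig, trivial⟩
  | const a => simp only [CTerm.abs, Good] at h ⊢; exact ⟨IA.Kt_Sig, h⟩
  | app t u iht ihu =>
      simp only [Good] at h
      simp only [CTerm.abs, Good]
      exact ⟨⟨IA.St_Sig, iht h.1⟩, ihu h.2⟩

theorem Good.ev_Sig {n : ℕ} {t : CTerm A n} {v : Fin n → A}
    (h : Good IA t) (hv : ∀ i, v i ∈ IA.Sig) : ev IA t v ∈ IA.Sig := by
  induction t with
  | var i => simpa [ev] using hv i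
  | const a => simpa [ev] using (by simpa [Good] using h : a ∈ IA.Sig)
  | app t u iht ihu =>
      simp only [Good] at h
      simp only [ev]
      exact IA.app_Sig (iht h.1) (ihu h.2)

end CTerm


namespace ImplicativeAlgebra

variable {A : Type u} [CompleteLattice A] (IA : ImplicativeAlgebra A)

theorem eqW_def (α β : PreW A) :
    IA.eqW α β = IA.times (IA.subW α β) (IA.subW β α) := by
  cases α with
  | mk ι₁ f₁ v₁ =>
    cases β with
    | mk ι₂ f₂ v₂ =>
      rw [eqW]
      rfl

/-- The body of the reflexivity realizer: `λ a k. k (λ w. w a r)` in context `[r, z]`. -/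
noncomputable def mTerm : CTerm A 2 :=
  CTerm.abs IA (CTerm.abs IA (.app (.var 3)
    (CTerm.abs IA (.app (.app (.var 4) (.var 2)) (.var 0)))))

/-- The step of the reflexivity realizer: `λ r z. z m m`. -/
noncomputable def reflStepT : CTerm A 0 :=
  CTerm.abs IA (CTerm.abs IA (.app (.app (.var 1) (IA.mTerm)) (IA.mTerm)))

noncomputable def ftv : A := CTerm.ev IA (IA.reflStepT) Fin.elim0

/-- `λ x. ft (x x)`. -/
noncomputable def dT : CTerm A 0 :=
  CTerm.abs IA (.app (.const IA.ftv) (.app (.var 0) (.var 0)))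

/-- The reflexivity realizer `r₀ := d d` where `d = λ x. ft (x x)`. -/
noncomputable def r0 : A := IA.app (CTerm.ev IA IA.dT Fin.elim0) (CTerm.ev IA IA.dT Fin.elim0)

theorem good_mTerm : CTerm.Good IA IA.mTerm := by
  refine (CTerm.Good.abs IA (CTerm.Good.abs IA ?_))
  simp only [CTerm.Good]
  exact ⟨trivial, CTerm.Good.abs IA (by simp [CTerm.Good])⟩

theorem good_reflStepT : CTerm.Good IA IA.reflStepT := by
  refine (CTerm.Good.abs IA (CTerm.Good.abs IA ?_))
  simp only [CTerm.Good]
  exact ⟨⟨trivial, IA.good_mTerm⟩, IA.good_mTerm⟩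

theorem ftv_Sig : IA.ftv ∈ IA.Sig :=
  CTerm.Good.ev_Sig IA (IA.good_reflStepT) (fun i => i.elim0)

theorem good_dT : CTerm.Good IA IA.dT := by
  refine CTerm.Good.abs IA ?_
  simp only [CTerm.Good]
  exact ⟨IA.ftv_Sig, trivial, trivial⟩

theorem r0_Sig : IA.r0 ∈ IA.Sig := by
  have h : CTerm.ev IA IA.dT Fin.elim0 ∈ IA.Sig :=
    CTerm.Good.ev_Sig IA (IA.good_dT) (fun i => i.elim0)
  exact IA.app_Sig h h

theorem r0_unfold : IA.r0 ≤ IA.app IA.ftv IA.r0 := by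
  have h := CTerm.app_ev_abs IA
      (.app (.const IA.ftv) (.app (.var 0) (.var 0)))
      Fin.elim0 (CTerm.ev IA IA.dT Fin.elim0)
  calc IA.r0 = IA.app (CTerm.ev IA IA.dT Fin.elim0) (CTerm.ev IA IA.dT Fin.elim0) := rfl
    _ ≤ _ := by
        refine h.trans ?_
        simp [CTerm.ev, Fin.snoc, show ((0 : Fin 1) : ℕ) = 0 from rfl, r0]

theorem refl_le (γ : PreW A) : IA.r0 ≤ IA.eqW γ γ := by
  induction γ with
  | mk ι f v ih =>
    refine IA.r0_unfold.trans ?_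
    rw [eqW]
    set S : A := ⨅ t : ι, IA.imp (v t)
        (IA.aex fun s : ι => IA.times (v s) (IA.eqW (f s) (f t))) with hS
    refine le_iInf fun x => IA.le_imp_of_app_le ?_
    set z₀ : A := IA.imp S (IA.imp S x) with hz
    -- environments
    set env1 : Fin 1 → A := Fin.snoc Fin.elim0 IA.r0 with henv1
    set env2 : Fin 2 → A := Fin.snoc env1 z₀ with henv2
    have step1 : IA.app IA.ftv IA.r0 ≤
        CTerm.ev IA (CTerm.abs IA (.app (.app (.var 1) (IA.mTerm)) (IA.mTerm))) env1 := by
      have := CTerm.app_ev_abs IA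
        (CTerm.abs IA (.app (.app (.var 1) (IA.mTerm)) (IA.mTerm))) Fin.elim0 IA.r0
      exact le_trans (le_of_eq rfl) this
    have step2 : IA.app (IA.app IA.ftv IA.r0) z₀ ≤
        CTerm.ev IA (.app (.app (.var 1) (IA.mTerm)) (IA.mTerm)) env2 := by
      refine le_trans (IA.app_mono step1 le_rfl) ?_
      exact CTerm.app_ev_abs IA _ env1 z₀
    set mstar : A := CTerm.ev IA IA.mTerm env2 with hm
    have hev2 : CTerm.ev IA (.app (.app (.var 1) (IA.mTerm)) (IA.mTerm)) env2
        = IA.app (IA.app z₀ mstar) mstar := by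
      simp [CTerm.ev, hm, henv2, henv1, Fin.snoc,
        show ((1 : Fin 2) : ℕ) = 1 from rfl, show ((0 : Fin 2) : ℕ) = 0 from rfl]
    have hmstar : mstar ≤ S := by
      rw [hS]
      refine le_iInf fun t => IA.le_imp_of_app_le ?_
      set g : ι → A := fun s => IA.times (v s) (IA.eqW (f s) (f t)) with hg
      have mstep1 : IA.app mstar (v t) ≤
          CTerm.ev IA (CTerm.abs IA (.app (.var 3)
            (CTerm.abs IA (.app (.app (.var 4) (.var 2)) (.var 0)))))
            (Fin.snoc env2 (v t)) :=
        CTerm.app_ev_abs IA _ env2 (v t)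
      refine le_iInf fun x' => IA.le_imp_of_app_le ?_
      set k₀ : A := ⨅ s : ι, IA.imp (g s) x' with hk
      set env3 : Fin 3 → A := Fin.snoc env2 (v t) with henv3
      set env4 : Fin 4 → A := Fin.snoc env3 k₀ with henv4
      have mstep2 : IA.app (IA.app mstar (v t)) k₀ ≤
          CTerm.ev IA (.app (.var 3)
            (CTerm.abs IA (.app (.app (.var 4) (.var 2)) (.var 0)))) env4 := by
        refine le_trans (IA.app_mono mstep1 le_rfl) ?_
        exact CTerm.app_ev_abs IA _ env3 k₀
      set wstar : A := CTerm.ev IA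
          (CTerm.abs IA (.app (.app (.var 4) (.var 2)) (.var 0))) env4 with hw
      have hev4 : CTerm.ev IA (.app (.var 3)
            (CTerm.abs IA (.app (.app (.var 4) (.var 2)) (.var 0)))) env4
          = IA.app k₀ wstar := by
        simp [CTerm.ev, hw, henv4, henv3, henv2, henv1, Fin.snoc,
          show ((3 : Fin 4) : ℕ) = 3 from rfl]
      have hwstar : wstar ≤ g t := by
        rw [hg]
        refine le_iInf fun y => IA.le_imp_of_app_le ?_
        set h₀ : A := IA.imp (v t) (IA.imp (IA.eqW (f t) (f t)) y) with hh
        have wstep : IA.app wstar h₀ ≤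
            CTerm.ev IA (.app (.app (.var 4) (.var 2)) (.var 0)) (Fin.snoc env4 h₀) :=
          CTerm.app_ev_abs IA _ env4 h₀
        have hev5 : CTerm.ev IA (.app (.app (.var 4) (.var 2)) (.var 0)) (Fin.snoc env4 h₀)
            = IA.app (IA.app h₀ (v t)) IA.r0 := by
          simp [CTerm.ev, henv4, henv3, henv2, henv1, Fin.snoc,
            show ((4 : Fin 5) : ℕ) = 4 from rfl, show ((2 : Fin 5) : ℕ) = 2 from rfl,
            show ((0 : Fin 5) : ℕ) = 0 from rfl]
        refine wstep.trans ?_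
        rw [hev5]
        refine le_trans (IA.app_mono (IA.imp_app_le _ _) (ih t)) ?_
        exact IA.imp_app_le _ _
      refine mstep2.trans ?_
      rw [hev4]
      refine le_trans (IA.app_mono (le_refl k₀) hwstar) ?_
      refine le_trans (IA.app_mono (iInf_le _ t) le_rfl) ?_
      exact IA.imp_app_le _ _
    refine step2.trans ?_
    rw [hev2]
    refine le_trans (IA.app_mono (IA.app_mono le_rfl hmstar) hmstar) ?_
    refine le_trans (IA.app_mono (IA.imp_app_le _ _) le_rfl) ?_
    exact IA.imp_app_le _ _

/-- The membership-introduction realizer `λ a k. k (λ w. w a r₀)`. -/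
noncomputable def miT : CTerm A 0 :=
  CTerm.abs IA (CTerm.abs IA (.app (.var 1)
    (CTerm.abs IA (.app (.app (.var 2) (.var 0)) (.const IA.r0)))))

noncomputable def mi : A := CTerm.ev IA IA.miT Fin.elim0

theorem good_miT : CTerm.Good IA IA.miT := by
  refine CTerm.Good.abs IA (CTerm.Good.abs IA ?_)
  simp only [CTerm.Good]
  exact ⟨trivial, CTerm.Good.abs IA (by simp [CTerm.Good, IA.r0_Sig])⟩

theorem mi_Sig : IA.mi ∈ IA.Sig :=
  CTerm.Good.ev_Sig IA IA.good_miT (fun i => i.elim0)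

theorem mi_le (γ : PreW A) (t : γ.dom) :
    IA.mi ≤ IA.imp (γ.val t) (IA.memW (γ.fam t) γ) := by
  refine IA.le_imp_of_app_le ?_
  unfold memW aex
  set g : γ.dom → A := fun s => IA.times (γ.val s) (IA.eqW (γ.fam s) (γ.fam t)) with hg
  set env1 : Fin 1 → A := Fin.snoc Fin.elim0 (γ.val t) with henv1
  have step1 : IA.app IA.mi (γ.val t) ≤
      CTerm.ev IA (CTerm.abs IA (.app (.var 1)
        (CTerm.abs IA (.app (.app (.var 2) (.var 0)) (.const IA.r0))))) env1 :=
    CTerm.app_ev_abs IA _ Fin.elim0 (γ.val t)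
  refine le_iInf fun x => IA.le_imp_of_app_le ?_
  set k₀ : A := ⨅ s, IA.imp (g s) x with hk
  set env2 : Fin 2 → A := Fin.snoc env1 k₀ with henv2
  have step2 : IA.app (IA.app IA.mi (γ.val t)) k₀ ≤
      CTerm.ev IA (.app (.var 1)
        (CTerm.abs IA (.app (.app (.var 2) (.var 0)) (.const IA.r0)))) env2 := by
    refine le_trans (IA.app_mono step1 le_rfl) ?_
    exact CTerm.app_ev_abs IA _ env1 k₀
  set wstar : A := CTerm.ev IA
      (CTerm.abs IA (.app (.app (.var 2) (.var 0)) (.const IA.r0))) env2 with hw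
  have hev2 : CTerm.ev IA (.app (.var 1)
        (CTerm.abs IA (.app (.app (.var 2) (.var 0)) (.const IA.r0)))) env2
      = IA.app k₀ wstar := by
    simp [CTerm.ev, hw, henv2, henv1, Fin.snoc,
      show ((1 : Fin 2) : ℕ) = 1 from rfl]
  have hwstar : wstar ≤ g t := by
    rw [hg]
    unfold times
    refine le_iInf fun y => IA.le_imp_of_app_le ?_
    set h₀ : A := IA.imp (γ.val t) (IA.imp (IA.eqW (γ.fam t) (γ.fam t)) y) with hh
    have wstep : IA.app wstar h₀ ≤
        CTerm.ev IA (.app (.app (.var 2) (.var 0)) (.const IA.r0)) (Fin.snoc env2 h₀) :=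
      CTerm.app_ev_abs IA _ env2 h₀
    have hev3 : CTerm.ev IA (.app (.app (.var 2) (.var 0)) (.const IA.r0)) (Fin.snoc env2 h₀)
        = IA.app (IA.app h₀ (γ.val t)) IA.r0 := by
      simp [CTerm.ev, henv2, henv1, Fin.snoc,
        show ((2 : Fin 3) : ℕ) = 2 from rfl, show ((0 : Fin 3) : ℕ) = 0 from rfl]
    refine wstep.trans ?_
    rw [hev3]
    have h1 : IA.app h₀ (γ.val t) ≤ IA.imp (IA.eqW (γ.fam t) (γ.fam t)) y :=
      IA.imp_app_le _ _
    refine le_trans (IA.app_mono h1 (IA.refl_le (γ.fam t))) ?_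
    exact IA.imp_app_le _ _
  refine step2.trans ?_
  rw [hev2]
  refine le_trans (IA.app_mono (le_refl k₀) hwstar) ?_
  refine le_trans (IA.app_mono (iInf_le _ t) le_rfl) ?_
  exact IA.imp_app_le _ _

/-- `λ a. u (mi a)` in context `[u, v, z]`. -/
noncomputable def g1T : CTerm A 3 :=
  CTerm.abs IA (.app (.var 0) (.app (.const IA.mi) (.var 3)))

/-- `λ a. v (mi a)` in context `[u, v, z]`. -/
noncomputable def g2T : CTerm A 3 :=
  CTerm.abs IA (.app (.var 1) (.app (.const IA.mi) (.var 3)))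

/-- `λ u v z. z (λ a. u (mi a)) (λ a. v (mi a))`. -/
noncomputable def extMT : CTerm A 0 :=
  CTerm.abs IA (CTerm.abs IA (CTerm.abs IA (.app (.app (.var 2) IA.g1T) IA.g2T)))

noncomputable def mM : A := CTerm.ev IA IA.extMT Fin.elim0

/-- The extensionality realizer `λ p. p M`. -/
noncomputable def eT : CTerm A 0 :=
  CTerm.abs IA (.app (.var 0) (.const IA.mM))

noncomputable def ee : A := CTerm.ev IA IA.eT Fin.elim0

theorem good_g1T : CTerm.Good IA IA.g1T :=
  CTerm.Good.abs IA (by simp [CTerm.Good, IA.mi_Sig])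

theorem good_g2T : CTerm.Good IA IA.g2T :=
  CTerm.Good.abs IA (by simp [CTerm.Good, IA.mi_Sig])

theorem good_extMT : CTerm.Good IA IA.extMT := by
  refine CTerm.Good.abs IA (CTerm.Good.abs IA (CTerm.Good.abs IA ?_))
  simp only [CTerm.Good]
  exact ⟨⟨trivial, IA.good_g1T⟩, IA.good_g2T⟩

theorem mM_Sig : IA.mM ∈ IA.Sig :=
  CTerm.Good.ev_Sig IA IA.good_extMT (fun i => i.elim0)

theorem ee_Sig : IA.ee ∈ IA.Sig := by
  have : CTerm.Good IA IA.eT := CTerm.Good.abs IA (by simp [CTerm.Good, IA.mM_Sig])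
  exact CTerm.Good.ev_Sig IA this (fun i => i.elim0)

theorem ext_le (κ : Cardinal.{u}) (α β : WSet A κ) :
    IA.ee ≤ IA.imp
      (IA.times (⨅ γ : WSet A κ, IA.imp (IA.memW γ.1 α.1) (IA.memW γ.1 β.1))
                (⨅ γ : WSet A κ, IA.imp (IA.memW γ.1 β.1) (IA.memW γ.1 α.1)))
      (IA.eqW α.1 β.1) := by
  set P : A := ⨅ γ : WSet A κ, IA.imp (IA.memW γ.1 α.1) (IA.memW γ.1 β.1) with hP
  set Q : A := ⨅ γ : WSet A κ, IA.imp (IA.memW γ.1 β.1) (IA.memW γ.1 α.1) with hQ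
  refine IA.le_imp_of_app_le ?_
  set p₀ : A := IA.times P Q with hp₀
  set S1 : A := IA.subW α.1 β.1 with hS1
  set S2 : A := IA.subW β.1 α.1 with hS2
  set T : A := IA.times S1 S2 with hT
  have step0 : IA.app IA.ee p₀ ≤
      CTerm.ev IA (.app (.var 0) (.const IA.mM)) (Fin.snoc Fin.elim0 p₀) :=
    CTerm.app_ev_abs IA _ Fin.elim0 p₀
  have hev0 : CTerm.ev IA (.app (.var 0) (.const IA.mM)) (Fin.snoc Fin.elim0 p₀)
      = IA.app p₀ IA.mM := by
    simp [CTerm.ev, Fin.snoc, show ((0 : Fin 1) : ℕ) = 0 from rfl]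
  have hM : IA.mM ≤ IA.imp P (IA.imp Q T) := by
    refine IA.le_imp_of_app_le (IA.le_imp_of_app_le ?_)
    set env1 : Fin 1 → A := Fin.snoc Fin.elim0 P with henv1
    set env2 : Fin 2 → A := Fin.snoc env1 Q with henv2
    have step1 : IA.app IA.mM P ≤
        CTerm.ev IA (CTerm.abs IA (CTerm.abs IA (.app (.app (.var 2) IA.g1T) IA.g2T))) env1 :=
      CTerm.app_ev_abs IA _ Fin.elim0 P
    have step2 : IA.app (IA.app IA.mM P) Q ≤
        CTerm.ev IA (CTerm.abs IA (.app (.app (.var 2) IA.g1T) IA.g2T)) env2 := by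
      refine le_trans (IA.app_mono step1 le_rfl) ?_
      exact CTerm.app_ev_abs IA _ env1 Q
    rw [hT]
    unfold times
    refine le_iInf fun x => IA.le_imp_of_app_le ?_
    set z₀ : A := IA.imp S1 (IA.imp S2 x) with hz
    set env3 : Fin 3 → A := Fin.snoc env2 z₀ with henv3
    have step3 : IA.app (IA.app (IA.app IA.mM P) Q) z₀ ≤
        CTerm.ev IA (.app (.app (.var 2) IA.g1T) IA.g2T) env3 := by
      refine le_trans (IA.app_mono step2 le_rfl) ?_
      exact CTerm.app_ev_abs IA _ env2 z₀
    set G1 : A := CTerm.ev IA IA.g1T env3 with hG1def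
    set G2 : A := CTerm.ev IA IA.g2T env3 with hG2def
    have hev3 : CTerm.ev IA (.app (.app (.var 2) IA.g1T) IA.g2T) env3
        = IA.app (IA.app z₀ G1) G2 := by
      simp [CTerm.ev, hG1def, hG2def, henv3, henv2, henv1, Fin.snoc,
        show ((2 : Fin 3) : ℕ) = 2 from rfl]
    have hG1 : G1 ≤ S1 := by
      rw [hS1]
      unfold subW
      refine le_iInf fun t => IA.le_imp_of_app_le ?_
      have gstep : IA.app G1 (α.1.val t) ≤
          CTerm.ev IA (.app (.var 0) (.app (.const IA.mi) (.var 3)))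
            (Fin.snoc env3 (α.1.val t)) := by
        rw [hG1def]
        exact CTerm.app_ev_abs IA _ env3 (α.1.val t)
      have hev4 : CTerm.ev IA (.app (.var 0) (.app (.const IA.mi) (.var 3)))
            (Fin.snoc env3 (α.1.val t))
          = IA.app P (IA.app IA.mi (α.1.val t)) := by
        simp [CTerm.ev, henv3, henv2, henv1, Fin.snoc,
          show ((0 : Fin 4) : ℕ) = 0 from rfl, show ((3 : Fin 4) : ℕ) = 3 from rfl]
      refine gstep.trans ?_
      rw [hev4]
      have hmi : IA.app IA.mi (α.1.val t) ≤ IA.memW (α.1.fam t) α.1 :=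
        IA.app_le (IA.mi_le α.1 t)
      have hPinst : P ≤ IA.imp (IA.memW (α.1.fam t) α.1) (IA.memW (α.1.fam t) β.1) :=
        iInf_le (fun γ : WSet A κ => IA.imp (IA.memW γ.1 α.1) (IA.memW γ.1 β.1))
          (WSet.fam α t)
      refine le_trans (IA.app_mono hPinst hmi) ?_
      exact IA.imp_app_le _ _
    have hG2 : G2 ≤ S2 := by
      rw [hS2]
      unfold subW
      refine le_iInf fun t => IA.le_imp_of_app_le ?_
      have gstep : IA.app G2 (β.1.val t) ≤
          CTerm.ev IA (.app (.var 1) (.app (.const IA.mi) (.var 3)))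
            (Fin.snoc env3 (β.1.val t)) := by
        rw [hG2def]
        exact CTerm.app_ev_abs IA _ env3 (β.1.val t)
      have hev4 : CTerm.ev IA (.app (.var 1) (.app (.const IA.mi) (.var 3)))
            (Fin.snoc env3 (β.1.val t))
          = IA.app Q (IA.app IA.mi (β.1.val t)) := by
        simp [CTerm.ev, henv3, henv2, henv1, Fin.snoc,
          show ((1 : Fin 4) : ℕ) = 1 from rfl, show ((3 : Fin 4) : ℕ) = 3 from rfl]
      refine gstep.trans ?_
      rw [hev4]
      have hmi : IA.app IA.mi (β.1.val t) ≤ IA.memW (β.1.fam t) β.1 :=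
        IA.app_le (IA.mi_le β.1 t)
      have hQinst : Q ≤ IA.imp (IA.memW (β.1.fam t) β.1) (IA.memW (β.1.fam t) α.1) :=
        iInf_le (fun γ : WSet A κ => IA.imp (IA.memW γ.1 β.1) (IA.memW γ.1 α.1))
          (WSet.fam β t)
      refine le_trans (IA.app_mono hQinst hmi) ?_
      exact IA.imp_app_le _ _
    refine step3.trans ?_
    rw [hev3]
    refine le_trans (IA.app_mono (IA.app_mono le_rfl hG1) hG2) ?_
    refine le_trans (IA.app_mono (IA.imp_app_le _ _) le_rfl) ?_
    exact IA.imp_app_le _ _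
  rw [IA.eqW_def, ← hS1, ← hS2, ← hT]
  refine step0.trans ?_
  rw [hev0]
  have hp : p₀ ≤ IA.imp (IA.imp P (IA.imp Q T)) T := by
    rw [hp₀]
    unfold times
    exact iInf_le _ T
  exact le_trans (IA.app_mono hp hM) (IA.imp_app_le _ _)

end ImplicativeAlgebra

set_option maxRecDepth 10000 in
set_option maxHeartbeats 1000000 in
theorem stmt12 {A : Type u} [CompleteLattice A] (IA : ImplicativeAlgebra A)
    (κ : Cardinal.{u}) (hκ : κ.IsInaccessible) (hA : Cardinal.mk A < κ) :
    IA.interp κ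
      (SetFormula.all (SetFormula.all
        (((SetFormula.all ((SetFormula.mem 2 0).imp (SetFormula.mem 2 1))).and
          (SetFormula.all ((SetFormula.mem 2 1).imp (SetFormula.mem 2 0)))).imp
         (SetFormula.eq 0 1))))
      (fun i => i.elim0) ∈ IA.Sig := by
  have h := IA.ee_Sig
  refine IA.Sig_upward h ?_
  simp only [ImplicativeAlgebra.interp, Fin.snoc, show ((2 : Fin 3) : ℕ) = 2 from rfl,
    show ((1 : Fin 3) : ℕ) = 1 from rfl, show ((0 : Fin 3) : ℕ) = 0 from rfl,
    show ((1 : Fin 2) : ℕ) = 1 from rfl, show ((0 : Fin 2) : ℕ) = 0 from rfl,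
    Nat.lt_irrefl, Nat.zero_lt_one, Nat.zero_lt_two, Nat.one_lt_two,
    dite_true, dite_false, if_true, if_false, Fin.castLT, cast_eq, Fin.eta,
    Nat.zero_lt_succ, Nat.one_lt_ofNat, show ¬(2:ℕ) < 2 from by norm_num,
    show (0:ℕ) < 2 from by norm_num, show (1:ℕ) < 2 from by norm_num,
    show ¬(1:ℕ) < 1 from by norm_num, show (0:ℕ) < 1 from by norm_num,
    show ¬(0:ℕ) = 0 → False from fun h => h rfl]
  refine le_iInf fun b1 => le_iInf fun b2 => ?_
  exact IA.ext_le κ b1 b2
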